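/- Let G be a group generated by three elements a, b, c such that no two elements of G generate all of G, and suppose there is an element z in the center of G with z ≠ 1 and z·z = 1 such that x·x ∈ {1, z} for every x ∈ G and the commutator of any two elements of G lies in {1, z}. Then either G is abelian, or the center of G has exactly 4 elements. -/

import Mathlib

open Subgroup
open scoped commutatorElement

section Helpers
variable {G : Type*} [Group G]

private lemma swap_rel {x y v : G} (h : ⁅x, y⁆ = v) : x * y = v * (y * x) := by
  rw [commutatorElement_def] at h
  rw [← h]; group

private lemma comm_mul (central : ∀ u v g : G, ⁅u, v⁆ * g = g * ⁅u, v⁆)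
    (x y g : G) : ⁅x * y, g⁆ = ⁅x, g⁆ * ⁅y, g⁆ := by
  have h1 : y * g * y⁻¹ = ⁅y, g⁆ * g := by rw [commutatorElement_def]; group
  calc ⁅x * y, g⁆ = x * (y * g * y⁻¹) * x⁻¹ * g⁻¹ := by rw [commutatorElement_def]; group
    _ = x * (⁅y, g⁆ * g) * x⁻¹ * g⁻¹ := by rw [h1]
    _ = ⁅y, g⁆ * (x * g * x⁻¹ * g⁻¹) := by rw [← mul_assoc, ← central y g x]; group
    _ = ⁅y, g⁆ * ⁅x, g⁆ := by rw [commutatorElement_def x g]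
    _ = ⁅x, g⁆ * ⁅y, g⁆ := (central x g _).symm

private lemma main_aux (a b c z w : G)
    (hgen : Subgroup.closure ({a, b, c} : Set G) = ⊤)
    (hno2 : ∀ x y : G, Subgroup.closure ({x, y} : Set G) ≠ ⊤)
    (hz : z ∈ Subgroup.center G) (hz1 : z ≠ 1) (hz2 : z * z = 1)
    (hsq : ∀ x : G, x * x = 1 ∨ x * x = z)
    (hab : ⁅a, b⁆ = z)
    (hwa : Commute w a) (hwb : Commute w b) (hwc : Commute w c)
    (hcw : c ∈ Subgroup.closure ({a, b, w} : Set G)) :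
    Nat.card (Subgroup.center G) = 4 := by
  have hzc : ∀ g : G, g * z = z * g := Subgroup.mem_center_iff.mp hz
  have hzinv : z⁻¹ = z := inv_eq_of_mul_eq_one_right hz2
  have hba : ⁅b, a⁆ = z := by rw [← commutatorElement_inv, hab, hzinv]
  have sba : b * a = z * (a * b) := swap_rel hba
  -- closure {a,b,w} is everything
  have hgen' : Subgroup.closure ({a, b, w} : Set G) = ⊤ := by
    rw [eq_top_iff, ← hgen]
    refine (Subgroup.closure_le _).mpr ?_
    intro x hx
    simp only [Set.mem_insert_iff, Set.mem_singleton_iff] at hx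
    rcases hx with rfl | rfl | rfl
    · exact subset_closure (by simp)
    · exact subset_closure (by simp)
    · exact hcw
  -- w is central
  have hwcen : ∀ g : G, g * w = w * g := by
    intro g
    have hg : g ∈ Subgroup.closure ({a, b, c} : Set G) := by rw [hgen]; trivial
    have : Commute w g := by
      induction hg using Subgroup.closure_induction with
      | mem x hx =>
        simp only [Set.mem_insert_iff, Set.mem_singleton_iff] at hx
        rcases hx with rfl | rfl | rfl
        exacts [hwa, hwb, hwc]
      | one => exact Commute.one_right w
      | mul u v hu hv ihu ihv => exact ihu.mul_right ihv
      | inv u hu ih => exact ih.inv_right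
    exact this.symm
  -- the set N = {1, z, w, z*w}
  have hNcen : ∀ n ∈ ({1, z, w, z * w} : Set G), ∀ g : G, n * g = g * n := by
    intro n hn g
    simp only [Set.mem_insert_iff, Set.mem_singleton_iff] at hn
    rcases hn with h | h | h | h <;> rw [h]
    · simp
    · exact (hzc g).symm
    · exact (hwcen g).symm
    · calc z * w * g = z * (w * g) := mul_assoc _ _ _
        _ = z * (g * w) := by rw [← hwcen g]
        _ = z * g * w := (mul_assoc _ _ _).symm
        _ = g * z * w := by rw [← hzc g]
        _ = g * (z * w) := mul_assoc _ _ _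
  have hNz : ∀ n ∈ ({1, z, w, z * w} : Set G), n * z ∈ ({1, z, w, z * w} : Set G) := by
    intro n hn
    simp only [Set.mem_insert_iff, Set.mem_singleton_iff] at hn ⊢
    rcases hn with h | h | h | h <;> rw [h]
    · simp
    · rw [hz2]; tauto
    · rw [hzc w]; tauto
    · rw [mul_assoc, hzc w, ← mul_assoc, hz2, one_mul]; tauto
  have hNw : ∀ n ∈ ({1, z, w, z * w} : Set G), n * w ∈ ({1, z, w, z * w} : Set G) := by
    intro n hn
    simp only [Set.mem_insert_iff, Set.mem_singleton_iff] at hn ⊢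
    rcases hn with h | h | h | h <;> rw [h]
    · simp
    · tauto
    · rcases hsq w with h' | h' <;> rw [h'] <;> tauto
    · rcases hsq w with h' | h'
      · rw [mul_assoc, h', mul_one]; tauto
      · rw [mul_assoc, h', hz2]; tauto
  have hmove : ∀ n t u : G, (∀ g : G, g * u = u * g) → (n * t) * u = (n * u) * t := by
    intro n t u hu
    rw [mul_assoc, hu t, ← mul_assoc]
  -- closure of the 16-element candidate set under right multiplication
  have hSz : ∀ g : G, (∃ n ∈ ({1, z, w, z * w} : Set G),
        g = n ∨ g = n * a ∨ g = n * b ∨ g = n * (a * b)) →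
      ∃ n ∈ ({1, z, w, z * w} : Set G),
        g * z = n ∨ g * z = n * a ∨ g * z = n * b ∨ g * z = n * (a * b) := by
    rintro g ⟨n, hn, h | rfl | rfl | rfl⟩
    · exact ⟨n * z, hNz n hn, Or.inl (by rw [h])⟩
    · exact ⟨n * z, hNz n hn, Or.inr (Or.inl (hmove n a z hzc))⟩
    · exact ⟨n * z, hNz n hn, Or.inr (Or.inr (Or.inl (hmove n b z hzc)))⟩
    · exact ⟨n * z, hNz n hn, Or.inr (Or.inr (Or.inr (hmove n (a * b) z hzc)))⟩
  have hSw : ∀ g : G, (∃ n ∈ ({1, z, w, z * w} : Set G),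
        g = n ∨ g = n * a ∨ g = n * b ∨ g = n * (a * b)) →
      ∃ n ∈ ({1, z, w, z * w} : Set G),
        g * w = n ∨ g * w = n * a ∨ g * w = n * b ∨ g * w = n * (a * b) := by
    rintro g ⟨n, hn, h | rfl | rfl | rfl⟩
    · exact ⟨n * w, hNw n hn, Or.inl (by rw [h])⟩
    · exact ⟨n * w, hNw n hn, Or.inr (Or.inl (hmove n a w hwcen))⟩
    · exact ⟨n * w, hNw n hn, Or.inr (Or.inr (Or.inl (hmove n b w hwcen)))⟩
    · exact ⟨n * w, hNw n hn, Or.inr (Or.inr (Or.inr (hmove n (a * b) w hwcen)))⟩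
  have hSa : ∀ g : G, (∃ n ∈ ({1, z, w, z * w} : Set G),
        g = n ∨ g = n * a ∨ g = n * b ∨ g = n * (a * b)) →
      ∃ n ∈ ({1, z, w, z * w} : Set G),
        g * a = n ∨ g * a = n * a ∨ g * a = n * b ∨ g * a = n * (a * b) := by
    have key : (a * b) * a = z * ((a * a) * b) := by
      rw [mul_assoc a b a, sba, ← mul_assoc a z, hzc a, mul_assoc z a, ← mul_assoc a a b]
    rintro g ⟨n, hn, h | rfl | rfl | rfl⟩
    · exact ⟨n, hn, Or.inr (Or.inl (by rw [h]))⟩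
    · rcases hsq a with ha | ha
      · exact ⟨n, hn, Or.inl (by rw [mul_assoc, ha, mul_one])⟩
      · exact ⟨n * z, hNz n hn, Or.inl (by rw [mul_assoc, ha])⟩
    · exact ⟨n * z, hNz n hn, Or.inr (Or.inr (Or.inr (by
        rw [mul_assoc, sba, ← mul_assoc])))⟩
    · rcases hsq a with ha | ha
      · refine ⟨n * z, hNz n hn, Or.inr (Or.inr (Or.inl ?_))⟩
        rw [mul_assoc, key, ha, one_mul, ← mul_assoc]
      · refine ⟨n, hn, Or.inr (Or.inr (Or.inl ?_))⟩
        rw [mul_assoc, key, ha, ← mul_assoc z z b, hz2, one_mul]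
  have hSb : ∀ g : G, (∃ n ∈ ({1, z, w, z * w} : Set G),
        g = n ∨ g = n * a ∨ g = n * b ∨ g = n * (a * b)) →
      ∃ n ∈ ({1, z, w, z * w} : Set G),
        g * b = n ∨ g * b = n * a ∨ g * b = n * b ∨ g * b = n * (a * b) := by
    rintro g ⟨n, hn, h | rfl | rfl | rfl⟩
    · exact ⟨n, hn, Or.inr (Or.inr (Or.inl (by rw [h])))⟩
    · exact ⟨n, hn, Or.inr (Or.inr (Or.inr (by rw [mul_assoc])))⟩
    · rcases hsq b with hb | hb
      · exact ⟨n, hn, Or.inl (by rw [mul_assoc, hb, mul_one])⟩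
      · exact ⟨n * z, hNz n hn, Or.inl (by rw [mul_assoc, hb])⟩
    · rcases hsq b with hb | hb
      · refine ⟨n, hn, Or.inr (Or.inl ?_)⟩
        rw [mul_assoc, mul_assoc a b b, hb, mul_one]
      · refine ⟨n * z, hNz n hn, Or.inr (Or.inl ?_)⟩
        rw [mul_assoc, mul_assoc a b b, hb, hzc a, ← mul_assoc]
  have Sall : ∀ g : G, ∃ n ∈ ({1, z, w, z * w} : Set G),
      g = n ∨ g = n * a ∨ g = n * b ∨ g = n * (a * b) := by
    intro g
    have hg : g ∈ Subgroup.closure ({a, b, w} : Set G) := by rw [hgen']; trivial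
    induction hg using Subgroup.closure_induction_right with
    | one => exact ⟨1, by simp, Or.inl rfl⟩
    | mul_right x hx y hy ih =>
      simp only [Set.mem_insert_iff, Set.mem_singleton_iff] at hy
      rcases hy with h | h | h <;> rw [h]
      · exact hSa x ih
      · exact hSb x ih
      · exact hSw x ih
    | mul_inv_cancel x hx y hy ih =>
      simp only [Set.mem_insert_iff, Set.mem_singleton_iff] at hy
      rcases hy with h | h | h <;> rw [h]
      · rcases hsq a with ha | ha
        · rw [inv_eq_of_mul_eq_one_right ha]; exact hSa x ih
        · have hai : a⁻¹ = z * a := inv_eq_of_mul_eq_one_right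
            (by rw [← mul_assoc, hzc a, mul_assoc, ha]; exact hz2)
          rw [hai, ← mul_assoc]; exact hSa _ (hSz x ih)
      · rcases hsq b with hb | hb
        · rw [inv_eq_of_mul_eq_one_right hb]; exact hSb x ih
        · have hbi : b⁻¹ = z * b := inv_eq_of_mul_eq_one_right
            (by rw [← mul_assoc, hzc b, mul_assoc, hb]; exact hz2)
          rw [hbi, ← mul_assoc]; exact hSb _ (hSz x ih)
      · rcases hsq w with hw | hw
        · rw [inv_eq_of_mul_eq_one_right hw]; exact hSw x ih
        · have hwi : w⁻¹ = z * w := inv_eq_of_mul_eq_one_right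
            (by rw [← mul_assoc, hzc w, mul_assoc, hw]; exact hz2)
          rw [hwi, ← mul_assoc]; exact hSw _ (hSz x ih)
  -- the center is exactly N
  have hcenter : (Subgroup.center G : Set G) = ({1, z, w, z * w} : Set G) := by
    ext x
    constructor
    · intro hx
      have hx' : x ∈ Subgroup.center G := hx
      have hxg : ∀ g : G, x * g = g * x := fun g => (Subgroup.mem_center_iff.mp hx' g).symm
      obtain ⟨n, hn, hcase⟩ := Sall x
      have ncen := hNcen n hn
      have hcontra : ¬ (a * b = b * a) := fun hcab =>
        hz1 (by rw [← hab]; exact commutatorElement_eq_one_iff_mul_comm.mpr hcab)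
      rcases hcase with h | rfl | rfl | rfl
      · exact h ▸ hn
      · exfalso
        apply hcontra
        have h := hxg b
        rw [mul_assoc n a b, ← mul_assoc b n a, ← ncen b, mul_assoc n b a] at h
        exact mul_left_cancel h
      · exfalso
        apply hcontra
        have h := hxg a
        rw [mul_assoc n b a, ← mul_assoc a n b, ← ncen a, mul_assoc n a b] at h
        exact (mul_left_cancel h).symm
      · exfalso
        apply hcontra
        have h := hxg a
        rw [mul_assoc n (a * b) a, ← mul_assoc a n (a * b), ← ncen a,
          mul_assoc n a (a * b)] at h
        have h2 : (a * b) * a = a * (a * b) := mul_left_cancel h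
        rw [mul_assoc] at h2
        have h3 : b * a = a * b := mul_left_cancel h2
        exact h3.symm
    · intro hn
      rw [SetLike.mem_coe, Subgroup.mem_center_iff]
      intro g
      exact (hNcen x hn g).symm
  -- w is not in ⟨a, b⟩, hence the four elements are distinct
  have hkey : ∀ u : G, u ∈ Subgroup.closure ({a, b} : Set G) → w ≠ u := by
    intro u hu heq
    apply hno2 a b
    rw [eq_top_iff, ← hgen]
    refine (Subgroup.closure_le _).mpr ?_
    intro t ht
    simp only [Set.mem_insert_iff, Set.mem_singleton_iff] at ht
    rcases ht with rfl | rfl | rfl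
    · exact subset_closure (by simp)
    · exact subset_closure (by simp)
    · refine (Subgroup.closure_le _).mpr ?_ hcw
      intro s hs
      simp only [Set.mem_insert_iff, Set.mem_singleton_iff] at hs
      rcases hs with rfl | rfl | rfl
      · exact subset_closure (by simp)
      · exact subset_closure (by simp)
      · exact heq ▸ hu
  have haab : a ∈ Subgroup.closure ({a, b} : Set G) := subset_closure (by simp)
  have hbab : b ∈ Subgroup.closure ({a, b} : Set G) := subset_closure (by simp)
  have hzab : z ∈ Subgroup.closure ({a, b} : Set G) := by
    rw [← hab, commutatorElement_def]
    exact mul_mem (mul_mem (mul_mem haab hbab) (inv_mem haab)) (inv_mem hbab)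
  have hw1 : w ≠ 1 := hkey 1 (one_mem _)
  have hwz : w ≠ z := hkey z hzab
  have hzw1 : (z * w : G) ≠ 1 := fun h =>
    hwz ((eq_inv_of_mul_eq_one_right h).trans hzinv)
  have hzwz : (z * w : G) ≠ z := fun h => hw1 (mul_left_cancel (h.trans (mul_one z).symm))
  have hzww : (z * w : G) ≠ w := fun h => hz1 (mul_right_cancel (h.trans (one_mul w).symm))
  -- conclude
  have hcard : Nat.card (Subgroup.center G) = Nat.card (({1, z, w, z * w} : Set G)) :=
    Nat.card_congr (Equiv.setCongr hcenter)
  rw [hcard, Nat.card_coe_set_eq]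
  rw [Set.ncard_insert_of_notMem (by simp [Ne.symm hz1, Ne.symm hw1, Ne.symm hzw1]),
    Set.ncard_insert_of_notMem (by simp [hwz.symm, Ne.symm hzwz]),
    Set.ncard_insert_of_notMem (by simp [Ne.symm hzww]),
    Set.ncard_singleton]

private lemma aux2 (a b c z : G)
    (hgen : Subgroup.closure ({a, b, c} : Set G) = ⊤)
    (hno2 : ∀ x y : G, Subgroup.closure ({x, y} : Set G) ≠ ⊤)
    (hz : z ∈ Subgroup.center G) (hz1 : z ≠ 1) (hz2 : z * z = 1)
    (hsq : ∀ x : G, x * x = 1 ∨ x * x = z)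
    (hcomm : ∀ x y : G, ⁅x, y⁆ = 1 ∨ ⁅x, y⁆ = z)
    (hab : ⁅a, b⁆ = z) :
    Nat.card (Subgroup.center G) = 4 := by
  have hzc : ∀ g : G, g * z = z * g := Subgroup.mem_center_iff.mp hz
  have hzinv : z⁻¹ = z := inv_eq_of_mul_eq_one_right hz2
  have central : ∀ u v g : G, ⁅u, v⁆ * g = g * ⁅u, v⁆ := by
    intro u v g
    rcases hcomm u v with h | h <;> rw [h]
    · rw [one_mul, mul_one]
    · exact (hzc g).symm
  have hrev : ∀ u v : G, ⁅u, v⁆ = z → ⁅v, u⁆ = z := by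
    intro u v h
    rw [← commutatorElement_inv, h, hzinv]
  have hrev1 : ∀ u v : G, ⁅u, v⁆ = 1 → ⁅v, u⁆ = 1 := by
    intro u v h
    rw [← commutatorElement_inv, h, inv_one]
  have hba : ⁅b, a⁆ = z := hrev a b hab
  rcases hcomm c a with h1 | h1 <;> rcases hcomm c b with h2 | h2
  · -- w = c
    refine main_aux a b c z c hgen hno2 hz hz1 hz2 hsq hab ?_ ?_ (Commute.refl c) ?_
    · exact commutatorElement_eq_one_iff_commute.mp h1
    · exact commutatorElement_eq_one_iff_commute.mp h2
    · exact subset_closure (by simp)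
  · -- ⁅c,a⁆ = 1, ⁅c,b⁆ = z : w = c * a
    refine main_aux a b c z (c * a) hgen hno2 hz hz1 hz2 hsq hab ?_ ?_ ?_ ?_
    · exact commutatorElement_eq_one_iff_commute.mp
        (by rw [comm_mul central, h1, commutatorElement_self, one_mul])
    · exact commutatorElement_eq_one_iff_commute.mp
        (by rw [comm_mul central, h2, hab, hz2])
    · exact commutatorElement_eq_one_iff_commute.mp
        (by rw [comm_mul central, commutatorElement_self, hrev1 c a h1, one_mul])
    · have : c = (c * a) * a⁻¹ := by group
      rw [this]
      exact mul_mem (subset_closure (by simp)) (inv_mem (subset_closure (by simp)))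
  · -- ⁅c,a⁆ = z, ⁅c,b⁆ = 1 : w = c * b
    refine main_aux a b c z (c * b) hgen hno2 hz hz1 hz2 hsq hab ?_ ?_ ?_ ?_
    · exact commutatorElement_eq_one_iff_commute.mp
        (by rw [comm_mul central, h1, hba, hz2])
    · exact commutatorElement_eq_one_iff_commute.mp
        (by rw [comm_mul central, h2, commutatorElement_self, one_mul])
    · exact commutatorElement_eq_one_iff_commute.mp
        (by rw [comm_mul central, commutatorElement_self, hrev1 c b h2, one_mul])
    · have : c = (c * b) * b⁻¹ := by group
      rw [this]
      exact mul_mem (subset_closure (by simp)) (inv_mem (subset_closure (by simp)))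
  · -- ⁅c,a⁆ = z, ⁅c,b⁆ = z : w = c * b * a
    refine main_aux a b c z (c * b * a) hgen hno2 hz hz1 hz2 hsq hab ?_ ?_ ?_ ?_
    · exact commutatorElement_eq_one_iff_commute.mp
        (by rw [comm_mul central, comm_mul central, h1, hba, commutatorElement_self,
          mul_one, hz2])
    · exact commutatorElement_eq_one_iff_commute.mp
        (by rw [comm_mul central, comm_mul central, h2, commutatorElement_self,
          mul_one, hab, hz2])
    · exact commutatorElement_eq_one_iff_commute.mp
        (by rw [comm_mul central, comm_mul central, commutatorElement_self,
          hrev c b h2, hrev c a h1, one_mul, hz2])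
    · have : c = ((c * b) * a) * a⁻¹ * b⁻¹ := by group
      rw [this]
      exact mul_mem (mul_mem (subset_closure (by simp))
        (inv_mem (subset_closure (by simp)))) (inv_mem (subset_closure (by simp)))

private lemma abelian_of_gens (a b c : G)
    (hgen : Subgroup.closure ({a, b, c} : Set G) = ⊤)
    (h1 : Commute a b) (h2 : Commute a c) (h3 : Commute b c) :
    ∀ x y : G, x * y = y * x := by
  have base : ∀ x ∈ ({a, b, c} : Set G), ∀ y, y ∈ Subgroup.closure ({a, b, c} : Set G) →
      Commute x y := by
    intro x hx y hy
    induction hy using Subgroup.closure_induction with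
    | mem u hu =>
      simp only [Set.mem_insert_iff, Set.mem_singleton_iff] at hx hu
      rcases hx with rfl | rfl | rfl <;> rcases hu with rfl | rfl | rfl
      exacts [Commute.refl _, h1, h2, h1.symm, Commute.refl _, h3, h2.symm, h3.symm,
        Commute.refl _]
    | one => exact Commute.one_right _
    | mul u v hu hv ihu ihv => exact ihu.mul_right ihv
    | inv u hu ih => exact ih.inv_right
  have all : ∀ x, x ∈ Subgroup.closure ({a, b, c} : Set G) →
      ∀ y, y ∈ Subgroup.closure ({a, b, c} : Set G) → Commute x y := by
    intro x hx
    induction hx using Subgroup.closure_induction with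
    | mem u hu => exact fun y hy => base u hu y hy
    | one => exact fun y hy => Commute.one_left _
    | mul u v hu hv ihu ihv => exact fun y hy => (ihu y hy).mul_left (ihv y hy)
    | inv u hu ih => exact fun y hy => (ih y hy).inv_left
  intro x y
  exact all x (by rw [hgen]; trivial) y (by rw [hgen]; trivial)

end Helpers

/-- A 3-generated group in which no two elements generate, with a central element `z` of
order 2 such that every square and every commutator lies in `{1, z}`, is either abelian
or has center of order exactly 4. -/
theorem stmt0 {G : Type*} [Group G] (a b c z : G)
    (hgen : Subgroup.closure ({a, b, c} : Set G) = ⊤)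
    (hno2 : ∀ x y : G, Subgroup.closure ({x, y} : Set G) ≠ ⊤)
    (hz : z ∈ Subgroup.center G) (hz1 : z ≠ 1) (hz2 : z * z = 1)
    (hsq : ∀ x : G, x * x = 1 ∨ x * x = z)
    (hcomm : ∀ x y : G, ⁅x, y⁆ = 1 ∨ ⁅x, y⁆ = z) :
    (∀ x y : G, x * y = y * x) ∨ Nat.card (Subgroup.center G) = 4 := by
  by_cases h1 : ⁅a, b⁆ = 1
  · by_cases h2 : ⁅a, c⁆ = 1
    · by_cases h3 : ⁅b, c⁆ = 1
      · exact Or.inl (abelian_of_gens a b c hgen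
          (commutatorElement_eq_one_iff_commute.mp h1)
          (commutatorElement_eq_one_iff_commute.mp h2)
          (commutatorElement_eq_one_iff_commute.mp h3))
      · refine Or.inr (aux2 b c a z ?_ hno2 hz hz1 hz2 hsq hcomm
          ((hcomm b c).resolve_left h3))
        rw [show ({b, c, a} : Set G) = {a, b, c} by ext x; simp; tauto]
        exact hgen
    · refine Or.inr (aux2 a c b z ?_ hno2 hz hz1 hz2 hsq hcomm
        ((hcomm a c).resolve_left h2))
      rw [show ({a, c, b} : Set G) = {a, b, c} by ext x; simp; tauto]
      exact hgen
  · exact Or.inr (aux2 a b c z hgen hno2 hz hz1 hz2 hsq hcomm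
      ((hcomm a b).resolve_left h1))
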